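/- Fix ρ ∈ (−1,0]. Then the function z ↦ g(ρ,z) is nondecreasing and convex on the interval [0,1]. -/

import Mathlib

open Real

/-- Gallager's `g` function: `g ρ z = ((1/2)(1+z)^{1/(1+ρ)} + (1/2)(1-z)^{1/(1+ρ)})^{1+ρ}`. -/
noncomputable def g (ρ z : ℝ) : ℝ :=
  ((1/2) * (1 + z) ^ (1/(1+ρ)) + (1/2) * (1 - z) ^ (1/(1+ρ))) ^ (1+ρ)

/-- Gallager's `E0` of a binary-input channel `W` (input `false` is 0, `true` is 1)
under the uniform input distribution. -/
noncomputable def E0 {Y : Type*} [Fintype Y] (ρ : ℝ) (W : Bool → Y → ℝ) : ℝ :=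
  - Real.log (∑ y, ((1/2) * (W false y) ^ (1/(1+ρ)) + (1/2) * (W true y) ^ (1/(1+ρ))) ^ (1+ρ))

/-- `q_W(y) = (W(y|0)+W(y|1))/2`. -/
noncomputable def qW {Y : Type*} (W : Bool → Y → ℝ) (y : Y) : ℝ :=
  (W false y + W true y) / 2

/-- `Δ_W(y) = (W(y|0) - W(y|1))/(W(y|0)+W(y|1))`. -/
noncomputable def ΔW {Y : Type*} (W : Bool → Y → ℝ) (y : Y) : ℝ :=
  (W false y - W true y) / (W false y + W true y)

/-- The minus polar transform of two channels. -/
noncomputable def Wminus {Y1 Y2 : Type*} (W1 : Bool → Y1 → ℝ) (W2 : Bool → Y2 → ℝ) :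
    Bool → Y1 × Y2 → ℝ :=
  fun u1 y => ∑ u2 : Bool, (1/2) * W1 (xor u1 u2) y.1 * W2 u2 y.2

/-- The plus polar transform of two channels; output is `(y1, y2, u1)`. -/
noncomputable def Wplus {Y1 Y2 : Type*} (W1 : Bool → Y1 → ℝ) (W2 : Bool → Y2 → ℝ) :
    Bool → Y1 × Y2 × Bool → ℝ :=
  fun u2 y => (1/2) * W1 (xor y.2.2 u2) y.1 * W2 u2 y.2.1

/-- The function `h(ρ, z1, z2)` from the `W⁺` representation. -/
noncomputable def hfun (ρ z1 z2 : ℝ) : ℝ :=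
  (1/2) * (1 + z1*z2) * g ρ ((z1 + z2)/(1 + z1*z2))
    + (1/2) * (1 - z1*z2) * g ρ ((z1 - z2)/(1 - z1*z2))
theorem g_monotone_convex (ρ : ℝ) (hρ : ρ ∈ Set.Ioc (-1:ℝ) 0) :
    MonotoneOn (fun z => g ρ z) (Set.Icc (0:ℝ) 1) ∧
      ConvexOn ℝ (Set.Icc (0:ℝ) 1) (fun z => g ρ z) := by
  obtain ⟨h1, h2⟩ := hρ
  have hpos : 0 < 1 + ρ := by linarith
  set β : ℝ := 1/(1+ρ) with hβ
  have hβ1 : (1:ℝ) ≤ β := by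
    rw [hβ, le_div_iff₀ hpos]; linarith
  have hβpos : (0:ℝ) < β := lt_of_lt_of_le one_pos hβ1
  set c : ℝ := (1/2 : ℝ) ^ (1+ρ) with hc
  have hcpos : 0 < c := Real.rpow_pos_of_pos (by norm_num) _
  have hcβ : c ^ β = 1/2 := by
    rw [hc, ← Real.rpow_mul (by norm_num : (0:ℝ) ≤ 1/2),
      hβ, mul_one_div, div_self hpos.ne', Real.rpow_one]
  set p : ENNReal := ENNReal.ofReal β with hp
  haveI : Fact (1 ≤ p) := ⟨by
    rw [hp, ← ENNReal.ofReal_one]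
    exact ENNReal.ofReal_le_ofReal hβ1⟩
  have hptoReal : p.toReal = β := ENNReal.toReal_ofReal hβpos.le
  set A : ℝ → PiLp p (fun _ : Fin 2 => ℝ) :=
    fun z => (WithLp.equiv p (∀ _ : Fin 2, ℝ)).symm ![c*(1+z), c*(1-z)] with hA
  have hnorm : ∀ z ∈ Set.Icc (-1:ℝ) 1, g ρ z = ‖A z‖ := by
    intro z hz
    rw [PiLp.norm_eq_sum (by rw [hptoReal]; exact hβpos)]
    simp only [hA, WithLp.equiv_symm_apply, PiLp.toLp_apply, Fin.sum_univ_two, Matrix.cons_val_zero,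
      Matrix.cons_val_one, Matrix.head_cons, Real.norm_eq_abs, hptoReal]
    rw [abs_of_nonneg (by nlinarith [hz.1] : (0:ℝ) ≤ c*(1+z)),
      abs_of_nonneg (by nlinarith [hz.2] : (0:ℝ) ≤ c*(1-z)),
      Real.mul_rpow hcpos.le (by linarith [hz.1]),
      Real.mul_rpow hcpos.le (by linarith [hz.2]), hcβ]
    have h1β : 1/β = 1 + ρ := by
      rw [hβ, one_div_one_div]
    rw [h1β, g]
  have hAcomb : ∀ (x y a b : ℝ), a + b = 1 →
      A (a*x + b*y) = a • A x + b • A y := by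
    intro x y a b hab
    ext i
    have : (a • A x + b • A y) i = a * (A x i) + b * (A y i) := rfl
    rw [this]
    fin_cases i <;>
      simp only [hA, WithLp.equiv_symm_apply, PiLp.toLp_apply, Fin.mk_zero, Fin.mk_one, Fin.isValue,
        Matrix.cons_val_zero, Matrix.cons_val_one, Matrix.head_cons] <;>
      linear_combination (-c) * hab
  have hgconv : ConvexOn ℝ (Set.Icc (-1:ℝ) 1) (fun z => g ρ z) := by
    refine ⟨convex_Icc _ _, fun x hx y hy a b ha hb hab => ?_⟩
    have hm : a • x + b • y ∈ Set.Icc (-1:ℝ) 1 := (convex_Icc _ _) hx hy ha hb hab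
    simp only [smul_eq_mul] at *
    rw [hnorm _ hm, hnorm _ hx, hnorm _ hy, hAcomb x y a b hab]
    calc ‖a • A x + b • A y‖ ≤ ‖a • A x‖ + ‖b • A y‖ := norm_add_le _ _
      _ = a * ‖A x‖ + b * ‖A y‖ := by
          rw [norm_smul, norm_smul, Real.norm_eq_abs, Real.norm_eq_abs,
            abs_of_nonneg ha, abs_of_nonneg hb]
  have hsub : Set.Icc (0:ℝ) 1 ⊆ Set.Icc (-1:ℝ) 1 := by
    intro t ht; exact ⟨by linarith [ht.1], ht.2⟩
  have heven : ∀ z : ℝ, g ρ (-z) = g ρ z := by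
    intro z
    have e1 : (1:ℝ) + -z = 1 - z := by ring
    have e2 : (1:ℝ) - -z = 1 + z := by ring
    rw [g, g, e1, e2, add_comm]
  constructor
  · intro x hx y hy hxy
    by_cases hy0 : y = 0
    · have hx0 : x = 0 := le_antisymm (hy0 ▸ hxy) hx.1
      simp [hx0, hy0]
    · have hypos : 0 < y := lt_of_le_of_ne hy.1 (Ne.symm hy0)
      set a : ℝ := (y + x) / (2*y) with ha'
      set b : ℝ := (y - x) / (2*y) with hb'
      have ha : 0 ≤ a := div_nonneg (by linarith [hx.1]) (by linarith)
      have hb : 0 ≤ b := div_nonneg (by linarith) (by linarith)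
      have hab : a + b = 1 := by
        rw [ha', hb', ← add_div, div_eq_one_iff_eq (by positivity)]
        ring
      have hcomb : a • y + b • (-y) = x := by
        simp only [smul_eq_mul, ha', hb']
        field_simp
        ring
      have hyM : y ∈ Set.Icc (-1:ℝ) 1 := ⟨by linarith [hy.1], hy.2⟩
      have hyM' : -y ∈ Set.Icc (-1:ℝ) 1 := ⟨by linarith [hy.2], by linarith [hy.1]⟩
      have := hgconv.2 hyM hyM' ha hb hab
      rw [hcomb] at this
      simp only [smul_eq_mul, heven] at this
      calc g ρ x ≤ a * g ρ y + b * g ρ y := this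
        _ = (a + b) * g ρ y := by ring
        _ = g ρ y := by rw [hab, one_mul]
  · exact hgconv.subset hsub (convex_Icc _ _)
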